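/- (Local Four-Vertex Theorem) Every generic convex polygon P with n ≥ 4 vertices has at least four locally extremal vertices; in fact l_-(P) ≥ 2 and l_+(P) ≥ 2. -/

import Mathlib

open EuclideanGeometry
open scoped Classical

noncomputable section

/-- The Euclidean plane. -/
abbrev Pt := EuclideanSpace ℝ (Fin 2)

/-- Signed area determinant of the triangle `a b c` (positive iff `a b c` is
counterclockwise, i.e. `c` lies strictly to the left of the directed line `a → b`). -/
def det2 (a b c : Pt) : ℝ :=
  (b 0 - a 0) * (c 1 - a 1) - (b 1 - a 1) * (c 0 - a 0)

/-- The vertices `V 0, V 1, …, V (n-1)` (indices mod `n`) are distinct and in convex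
position, listed counterclockwise: every other vertex lies strictly to the left of
each directed edge. -/
def ConvexCCW {n : ℕ} (V : ZMod n → Pt) : Prop :=
  Function.Injective V ∧
    ∀ i j : ZMod n, j ≠ i → j ≠ i + 1 → 0 < det2 (V i) (V (i + 1)) (V j)

/-- The polygon is generic: no three vertices are collinear and no four vertices lie
on a common circle. -/
def GenericPoly {n : ℕ} (V : ZMod n → Pt) : Prop :=
  (∀ i j k : ZMod n, i ≠ j → j ≠ k → i ≠ k →
      ¬ Collinear ℝ ({V i, V j, V k} : Set Pt)) ∧
  (∀ i j k l : ZMod n, i ≠ j → i ≠ k → i ≠ l → j ≠ k → j ≠ l → k ≠ l →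
      ¬ ∃ (O : Pt) (R : ℝ),
        dist (V i) O = R ∧ dist (V j) O = R ∧ dist (V k) O = R ∧ dist (V l) O = R)

/-- `O i` is the center and `R i` the radius of the circle `C i` through
`V (i-1)`, `V i`, `V (i+1)`. -/
def IsCircumData {n : ℕ} (V O : ZMod n → Pt) (R : ZMod n → ℝ) : Prop :=
  ∀ i : ZMod n,
    dist (V (i - 1)) (O i) = R i ∧ dist (V i) (O i) = R i ∧
      dist (V (i + 1)) (O i) = R i

/-- The polygon is coherent: each circumcenter `O i` lies in the closed infinite cone
with apex `V i` spanned by the rays from `V i` through `V (i-1)` and `V (i+1)`. -/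
def Coherent {n : ℕ} (V O : ZMod n → Pt) : Prop :=
  ∀ i : ZMod n, ∃ s t : ℝ, 0 ≤ s ∧ 0 ≤ t ∧
    O i - V i = s • (V (i - 1) - V i) + t • (V (i + 1) - V i)

/-- `V i` is locally maximal-extremal: `V (i-2)` and `V (i+2)` lie strictly outside `C i`. -/
def LocMax {n : ℕ} (V O : ZMod n → Pt) (R : ZMod n → ℝ) (i : ZMod n) : Prop :=
  R i < dist (V (i - 2)) (O i) ∧ R i < dist (V (i + 2)) (O i)

/-- `V i` is locally minimal-extremal: `V (i-2)` and `V (i+2)` lie strictly inside `C i`. -/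
def LocMin {n : ℕ} (V O : ZMod n → Pt) (R : ZMod n → ℝ) (i : ZMod n) : Prop :=
  dist (V (i - 2)) (O i) < R i ∧ dist (V (i + 2)) (O i) < R i

/-- `V i` is globally maximal-extremal: the open disk bounded by `C i` contains no vertex. -/
def GlobMax {n : ℕ} (V O : ZMod n → Pt) (R : ZMod n → ℝ) (i : ZMod n) : Prop :=
  ∀ j : ZMod n, R i ≤ dist (V j) (O i)

/-- `V i` is globally minimal-extremal: the open disk bounded by `C i` contains every
vertex other than `V (i-1)`, `V i`, `V (i+1)`. -/
def GlobMin {n : ℕ} (V O : ZMod n → Pt) (R : ZMod n → ℝ) (i : ZMod n) : Prop :=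
  ∀ j : ZMod n, j ≠ i - 1 → j ≠ i → j ≠ i + 1 → dist (V j) (O i) < R i

/-- `V i` is radially maximal-extremal: `R (i-1) < R i > R (i+1)`. -/
def RadMax {n : ℕ} (R : ZMod n → ℝ) (i : ZMod n) : Prop :=
  R (i - 1) < R i ∧ R (i + 1) < R i

/-- `V i` is radially minimal-extremal: `R (i-1) > R i < R (i+1)`. -/
def RadMin {n : ℕ} (R : ZMod n → ℝ) (i : ZMod n) : Prop :=
  R i < R (i - 1) ∧ R i < R (i + 1)

end


noncomputable section FourVertexAux

/-- squared distance in coordinates -/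
lemma dist_sq (p q : Pt) : dist p q ^ 2 = (p 0 - q 0) ^ 2 + (p 1 - q 1) ^ 2 := by
  rw [EuclideanSpace.dist_eq, Real.sq_sqrt (by positivity)]
  simp [Fin.sum_univ_two, Real.dist_eq, sq_abs]

lemma pt_ext_iff (p q : Pt) : p = q ↔ p 0 = q 0 ∧ p 1 = q 1 := by
  constructor
  · rintro rfl; exact ⟨rfl, rfl⟩
  · rintro ⟨h0, h1⟩
    ext i
    fin_cases i
    exacts [h0, h1]

/-- the scalar product `(p-A)·(p-B)`. -/
def ipr (A B p : Pt) : ℝ := (p 0 - A 0) * (p 0 - B 0) + (p 1 - A 1) * (p 1 - B 1)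

/-- Power of the point `p` with respect to the circle through `A` and `B` whose center
is `midpoint A B + t · rot90 (B - A)`. -/
def pw (A B p : Pt) (t : ℝ) : ℝ := ipr A B p - 2 * t * det2 A B p

lemma pw_left (A B : Pt) (t : ℝ) : pw A B A t = 0 := by
  unfold pw ipr det2; ring

lemma pw_right (A B : Pt) (t : ℝ) : pw A B B t = 0 := by
  unfold pw ipr det2; ring

lemma exists_center (A B : Pt) (t : ℝ) :
    ∃ Z : Pt, ∀ p : Pt, dist p Z ^ 2 - dist A Z ^ 2 = pw A B p t := by
  refine ⟨(WithLp.equiv 2 (Fin 2 → ℝ)).symm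
    ![(A 0 + B 0) / 2 - t * (B 1 - A 1), (A 1 + B 1) / 2 + t * (B 0 - A 0)], fun p => ?_⟩
  have h0 : ((WithLp.equiv 2 (Fin 2 → ℝ)).symm
      ![(A 0 + B 0) / 2 - t * (B 1 - A 1), (A 1 + B 1) / 2 + t * (B 0 - A 0)] : Pt) 0
      = (A 0 + B 0) / 2 - t * (B 1 - A 1) := rfl
  have h1 : ((WithLp.equiv 2 (Fin 2 → ℝ)).symm
      ![(A 0 + B 0) / 2 - t * (B 1 - A 1), (A 1 + B 1) / 2 + t * (B 0 - A 0)] : Pt) 1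
      = (A 1 + B 1) / 2 + t * (B 0 - A 0) := rfl
  rw [dist_sq, dist_sq, h0, h1, pw, ipr, det2]
  ring

lemma exists_param (A B Z : Pt) (hAB : A ≠ B) (h : dist A Z = dist B Z) :
    ∃ t : ℝ, ∀ p : Pt, dist p Z ^ 2 - dist A Z ^ 2 = pw A B p t := by
  have hq : (B 0 - A 0) ^ 2 + (B 1 - A 1) ^ 2 ≠ 0 := by
    intro hc
    apply hAB
    rw [pt_ext_iff]
    constructor <;> nlinarith [sq_nonneg (B 0 - A 0), sq_nonneg (B 1 - A 1)]
  have horth : (A 0 - Z 0) ^ 2 + (A 1 - Z 1) ^ 2 = (B 0 - Z 0) ^ 2 + (B 1 - Z 1) ^ 2 := by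
    have := congrArg (· ^ 2) h
    simpa [dist_sq] using this
  refine ⟨((Z 0 - (A 0 + B 0) / 2) * (-(B 1 - A 1)) + (Z 1 - (A 1 + B 1) / 2) * (B 0 - A 0)) /
    ((B 0 - A 0) ^ 2 + (B 1 - A 1) ^ 2), fun p => ?_⟩
  rw [dist_sq, dist_sq, pw, ipr, det2]
  field_simp
  linear_combination (-1 * ((p 0 - A 0) * (B 0 - A 0) + (p 1 - A 1) * (B 1 - A 1))) * horth

lemma det2_cycle (a b c : Pt) : det2 a b c = det2 b c a := by unfold det2; ring

lemma det2_swap (a b c : Pt) : det2 a b c = - det2 b a c := by unfold det2; ring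

lemma det2_ne_zero_of_not_collinear {a b c : Pt} (h : ¬ Collinear ℝ ({a, b, c} : Set Pt)) :
    det2 a b c ≠ 0 := by
  intro hd
  apply h
  by_cases hab : b = a
  · subst hab
    have hset : ({b, b, c} : Set Pt) = {b, c} := by simp
    rw [hset]
    exact collinear_pair ℝ _ _
  · have hb : (b 0 - a 0) ≠ 0 ∨ (b 1 - a 1) ≠ 0 := by
      by_contra hc
      push_neg at hc
      exact hab ((pt_ext_iff b a).2 ⟨by linarith [hc.1], by linarith [hc.2]⟩)
    -- c - a = μ • (b - a)
    have key : ∃ μ : ℝ, c 0 - a 0 = μ * (b 0 - a 0) ∧ c 1 - a 1 = μ * (b 1 - a 1) := by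
      rcases hb with h0 | h1
      · refine ⟨(c 0 - a 0) / (b 0 - a 0), by field_simp, ?_⟩
        have : (b 0 - a 0) * (c 1 - a 1) = (b 1 - a 1) * (c 0 - a 0) := by
          unfold det2 at hd; linarith
        field_simp
        linarith [this]
      · refine ⟨(c 1 - a 1) / (b 1 - a 1), ?_, by field_simp⟩
        have : (b 0 - a 0) * (c 1 - a 1) = (b 1 - a 1) * (c 0 - a 0) := by
          unfold det2 at hd; linarith
        field_simp
        linarith [this]
    obtain ⟨μ, h0, h1⟩ := key
    rw [collinear_iff_of_mem (Set.mem_insert a _)]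
    refine ⟨b - a, fun p hp => ?_⟩
    have hcases : p = a ∨ p = b ∨ p = c := by
      simpa [Set.mem_insert_iff, Set.mem_singleton_iff] using hp
    have key2 : ∀ ν : ℝ, p 0 = ν * (b 0 - a 0) + a 0 → p 1 = ν * (b 1 - a 1) + a 1 →
        ∃ r : ℝ, p = r • (b - a) +ᵥ a := by
      intro ν k0 k1
      refine ⟨ν, ?_⟩
      rw [pt_ext_iff]
      constructor
      · simp only [vadd_eq_add, PiLp.add_apply, PiLp.smul_apply, PiLp.sub_apply, smul_eq_mul]
        linarith
      · simp only [vadd_eq_add, PiLp.add_apply, PiLp.smul_apply, PiLp.sub_apply, smul_eq_mul]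
        linarith
    rcases hcases with rfl | rfl | rfl
    · exact key2 0 (by ring) (by ring)
    · exact key2 1 (by ring) (by ring)
    · exact key2 μ (by linarith) (by linarith)

lemma center_unique {A B C Z Z' : Pt} (hd : det2 A B C ≠ 0)
    (h1 : dist A Z = dist B Z) (h2 : dist B Z = dist C Z)
    (h1' : dist A Z' = dist B Z') (h2' : dist B Z' = dist C Z') : Z = Z' := by
  have sq : ∀ (x y w : Pt), dist x w = dist y w →
      (x 0 - w 0) ^ 2 + (x 1 - w 1) ^ 2 = (y 0 - w 0) ^ 2 + (y 1 - w 1) ^ 2 := by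
    intro x y w hxy
    have := congrArg (· ^ 2) hxy
    simpa [dist_sq] using this
  have a1 := sq _ _ _ h1
  have a2 := sq _ _ _ h2
  have a1' := sq _ _ _ h1'
  have a2' := sq _ _ _ h2'
  have e1 : (B 0 - A 0) * (Z 0 - Z' 0) + (B 1 - A 1) * (Z 1 - Z' 1) = 0 := by
    linear_combination (a1 - a1') / 2
  have e2 : (C 0 - B 0) * (Z 0 - Z' 0) + (C 1 - B 1) * (Z 1 - Z' 1) = 0 := by
    linear_combination (a2 - a2') / 2
  have hcross : det2 A B C = (B 0 - A 0) * (C 1 - B 1) - (B 1 - A 1) * (C 0 - B 0) := by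
    unfold det2; ring
  have w0 : (Z 0 - Z' 0) * det2 A B C = 0 := by
    rw [hcross]; linear_combination (C 1 - B 1) * e1 - (B 1 - A 1) * e2
  have w1 : (Z 1 - Z' 1) * det2 A B C = 0 := by
    rw [hcross]; linear_combination (B 0 - A 0) * e2 - (C 0 - B 0) * e1
  rw [pt_ext_iff]
  constructor
  · have := mul_eq_zero.1 w0
    rcases this with h | h
    · linarith
    · exact absurd h hd
  · have := mul_eq_zero.1 w1
    rcases this with h | h
    · linarith
    · exact absurd h hd

lemma gp_trans {a b p q r : Pt} (h1 : 0 < det2 a b p) (h2 : 0 < det2 a b q)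
    (h3 : 0 < det2 a b r) (h4 : 0 < det2 b p q) (h5 : 0 < det2 b q r) :
    0 < det2 b p r := by
  have key : det2 a b q * det2 b p r = det2 a b p * det2 b q r + det2 a b r * det2 b p q := by
    unfold det2; ring
  have pos : 0 < det2 a b q * det2 b p r := by
    rw [key]
    exact add_pos (mul_pos h1 h5) (mul_pos h3 h4)
  rcases mul_pos_iff.1 pos with ⟨_, h⟩ | ⟨h, _⟩
  · exact h
  · linarith

section Poly

variable {n : ℕ} [NeZero n]

set_option linter.unusedSectionVars false in
lemma natCast_zmod_ne_zero {p : ℕ} (h1 : 0 < p) (h2 : p < n) : ((p : ℕ) : ZMod n) ≠ 0 := by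
  rw [Ne, ZMod.natCast_eq_zero_iff]
  intro hdvd
  exact absurd (Nat.le_of_dvd h1 hdvd) (by omega)

lemma val_coe_coe (x : ZMod n) : ((x.val : ℕ) : ZMod n) = x := ZMod.natCast_rightInverse x

lemma idx_ne_self (i : ZMod n) {a : ℕ} (h1 : 0 < a) (h2 : a < n) : i ≠ i + (a : ZMod n) := by
  rw [Ne, left_eq_add]
  exact natCast_zmod_ne_zero h1 h2

set_option linter.unusedSectionVars false in
lemma idx_ne (i : ZMod n) {a b : ℕ} (ha : a < n) (hb : b < n) (hab : a ≠ b) :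
    i + (a : ZMod n) ≠ i + (b : ZMod n) := by
  intro h
  have h2 : ((a : ℕ) : ZMod n) = ((b : ℕ) : ZMod n) := add_left_cancel h
  have h3 : ((a : ℕ) : ZMod n).val = ((b : ℕ) : ZMod n).val := by rw [h2]
  rw [ZMod.val_cast_of_lt ha, ZMod.val_cast_of_lt hb] at h3
  exact hab h3

set_option linter.unusedSectionVars false in
lemma sub_one_eq (hn : 4 ≤ n) (i : ZMod n) : i - 1 = i + ((n - 1 : ℕ) : ZMod n) := by
  have h : ((n - 1 : ℕ) : ZMod n) = -1 := by
    have : ((n - 1 : ℕ) : ZMod n) = (n : ℕ) - 1 := by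
      push_cast [Nat.cast_sub (by omega : 1 ≤ n)]
      ring
    rw [this, ZMod.natCast_self]
    ring
  rw [h]
  ring

variable {V : ZMod n → Pt}

lemma consec_pos (hn : 4 ≤ n) (hconv : ConvexCCW V) {r : ℕ} (hr1 : 1 ≤ r) (hr2 : r ≤ n - 2)
    (i : ZMod n) : 0 < det2 (V i) (V (i + ((r : ℕ) : ZMod n))) (V (i + ((r + 1 : ℕ) : ZMod n))) := by
  have hcast : i + ((r + 1 : ℕ) : ZMod n) = (i + ((r : ℕ) : ZMod n)) + 1 := by
    push_cast
    ring
  have h1 : i ≠ i + ((r : ℕ) : ZMod n) := idx_ne_self i hr1 (by omega)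
  have h2 : i ≠ (i + ((r : ℕ) : ZMod n)) + 1 := by
    rw [← hcast]
    exact idx_ne_self i (by omega) (by omega)
  have hE := hconv.2 (i + ((r : ℕ) : ZMod n)) i h1 h2
  rw [det2_cycle, hcast]
  exact hE

lemma chord_main (hn : 4 ≤ n) (hconv : ConvexCCW V) :
    ∀ q p : ℕ, ∀ i : ZMod n, 1 ≤ p → p < q → q ≤ n - 1 →
      0 < det2 (V i) (V (i + ((p : ℕ) : ZMod n))) (V (i + ((q : ℕ) : ZMod n))) := by
  intro q
  induction q using Nat.strong_induction_on with
  | _ q IH =>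
    intro p i hp hpq hq
    have hi1 : (i - 1) + 1 = i := by ring
    have hhp : ∀ m : ℕ, 1 ≤ m → m ≤ n - 2 →
        0 < det2 (V (i - 1)) (V i) (V (i + ((m : ℕ) : ZMod n))) := by
      intro m hm1 hm2
      have c1 : i + ((m : ℕ) : ZMod n) ≠ i - 1 := by
        rw [sub_one_eq hn i]
        exact idx_ne i (by omega) (by omega) (by omega)
      have c2 : i + ((m : ℕ) : ZMod n) ≠ (i - 1) + 1 := by
        rw [hi1]
        exact (idx_ne_self i hm1 (by omega)).symm
      have hE := hconv.2 (i - 1) (i + ((m : ℕ) : ZMod n)) c1 c2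
      rwa [hi1] at hE
    by_cases hbase : p = q - 1
    · have hqe : q = (q - 1) + 1 := by omega
      rw [hbase, hqe]
      exact consec_pos hn hconv (by omega) (by omega) i
    · by_cases htop : q = n - 1
      · have hiq : i + ((q : ℕ) : ZMod n) = i - 1 := by
          rw [htop]
          exact (sub_one_eq hn i).symm
        rw [hiq, det2_cycle, det2_cycle]
        have c1 : i + ((p : ℕ) : ZMod n) ≠ i - 1 := by
          rw [sub_one_eq hn i]
          exact idx_ne i (by omega) (by omega) (by omega)
        have c2 : i + ((p : ℕ) : ZMod n) ≠ (i - 1) + 1 := by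
          rw [hi1]
          exact (idx_ne_self i hp (by omega)).symm
        have hE := hconv.2 (i - 1) (i + ((p : ℕ) : ZMod n)) c1 c2
        rwa [hi1] at hE
      · have h5 : 0 < det2 (V i) (V (i + ((q - 1 : ℕ) : ZMod n))) (V (i + ((q : ℕ) : ZMod n))) := by
          have := consec_pos hn hconv (r := q - 1) (by omega) (by omega) i
          rwa [show (q - 1) + 1 = q from by omega] at this
        exact gp_trans (hhp p hp (by omega)) (hhp (q - 1) (by omega) (by omega))
          (hhp q (by omega) (by omega))
          (IH (q - 1) (by omega) p i hp (by omega) (by omega)) h5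

/-- `j` lies strictly inside the ccw arc from `a` to `b`. -/
def BtwA (a b j : ZMod n) : Prop := 0 < (j - a).val ∧ (j - a).val < (b - a).val

lemma decomp (a x : ZMod n) : x = a + (((x - a).val : ℕ) : ZMod n) := by
  rw [val_coe_coe]
  ring

set_option linter.unusedSectionVars false in
lemma btw_ne_left {a b j : ZMod n} (h : BtwA a b j) : j ≠ a := by
  intro hja
  have h1 := h.1
  rw [hja, sub_self, ZMod.val_zero] at h1
  exact lt_irrefl 0 h1

set_option linter.unusedSectionVars false in
lemma btw_ne_right {a b j : ZMod n} (h : BtwA a b j) : j ≠ b := by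
  intro hjb
  have h2 := h.2
  rw [hjb] at h2
  exact lt_irrefl _ h2

lemma val_eq_imp_eq {x y : ZMod n} (h : x.val = y.val) : x = y := by
  rw [← val_coe_coe x, ← val_coe_coe y, h]

lemma btw_or {a b j : ZMod n} (hab : a ≠ b) (hja : j ≠ a) (hjb : j ≠ b) :
    BtwA a b j ∨ BtwA b a j := by
  have hu : (j - a).val ≠ 0 := fun h => hja (sub_eq_zero.1 ((ZMod.val_eq_zero _).1 h))
  have hw : (b - a).val ≠ 0 := fun h => (Ne.symm hab) (sub_eq_zero.1 ((ZMod.val_eq_zero _).1 h))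
  by_cases hlt : (j - a).val < (b - a).val
  · exact Or.inl ⟨Nat.pos_of_ne_zero hu, hlt⟩
  · right
    have hne : (j - a).val ≠ (b - a).val := fun h => hjb (by
      have := val_eq_imp_eq h
      have h2 : j - a + a = b - a + a := by rw [this]
      simpa using h2)
    have hwu : (b - a).val ≤ (j - a).val := by omega
    have hjb' : j - b = (j - a) - (b - a) := by ring
    have hab' : a - b = -(b - a) := by ring
    haveI : NeZero (b - a) := ⟨fun h => hw (by rw [h]; exact ZMod.val_zero)⟩
    have v1 : (j - b).val = (j - a).val - (b - a).val := by
      rw [hjb', ZMod.val_sub hwu]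
    have v2 : (a - b).val = n - (b - a).val := by
      rw [hab', ZMod.val_neg_of_ne_zero]
    constructor
    · omega
    · rw [v1, v2]
      have := ZMod.val_lt (j - a)
      omega

lemma chord_btw (hn : 4 ≤ n) (hconv : ConvexCCW V) {a b j : ZMod n} (h : BtwA a b j) :
    0 < det2 (V b) (V a) (V j) := by
  have hj := decomp a j
  have hb := decomp a b
  have key := chord_main hn hconv ((b - a).val) ((j - a).val) a h.1 h.2
    (by have := ZMod.val_lt (b - a); omega)
  rw [← hj, ← hb] at key
  rw [det2_cycle, det2_cycle] at key
  exact key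

lemma chord_far (hn : 4 ≤ n) (hconv : ConvexCCW V) {a b j : ZMod n} (hab : a ≠ b)
    (hja : j ≠ a) (hjb : j ≠ b) (h : ¬ BtwA a b j) : det2 (V b) (V a) (V j) < 0 := by
  have hbtw : BtwA b a j := (btw_or hab hja hjb).resolve_left h
  have := chord_btw hn hconv hbtw
  have hs : det2 (V a) (V b) (V j) = - det2 (V b) (V a) (V j) := det2_swap _ _ _
  linarith [this, det2_swap (V a) (V b) (V j)]

lemma dist_eq_of_sq_eq {x y : ℝ} (hx : 0 ≤ x) (hy : 0 ≤ y) (h : x ^ 2 = y ^ 2) : x = y := by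
  nlinarith [sq_nonneg (x - y), sq_nonneg (x + y)]

lemma not_concyclic (hconv : ConvexCCW V) (hgen : GenericPoly V) {a b c d : ZMod n}
    (hba : b ≠ a) (hbc : b ≠ c) (hbd : b ≠ d) (hac : a ≠ c) (had : a ≠ d) (hcd : c ≠ d)
    {t : ℝ} (hc : pw (V b) (V a) (V c) t = 0) (hd : pw (V b) (V a) (V d) t = 0) : False := by
  obtain ⟨Z, hZ⟩ := exists_center (V b) (V a) t
  have key : ∀ p : Pt, pw (V b) (V a) p t = 0 → dist p Z = dist (V b) Z := by
    intro p hp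
    have h1 := hZ p
    rw [hp] at h1
    exact dist_eq_of_sq_eq dist_nonneg dist_nonneg (by linarith)
  exact hgen.2 b a c d hba hbc hbd hac had hcd
    ⟨Z, dist (V b) Z, rfl, key (V a) (pw_right _ _ _), key (V c) hc, key (V d) hd⟩

/-- separation data for the chord `(a, b)`: a circle through `V a` and `V b` with all
arc-interior vertices strictly `ε`-outside and all other vertices weakly `ε`-inside-or-outside. -/
def SepC (V : ZMod n → Pt) (ε : ℝ) (a b : ZMod n) (t0 : ℝ) : Prop :=
  (∀ j, BtwA a b j → 0 < ε * pw (V b) (V a) (V j) t0) ∧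
  (∀ j, j ≠ a → j ≠ b → ¬ BtwA a b j → 0 ≤ ε * pw (V b) (V a) (V j) t0)

/-- `V i` together with its two neighbours spans a circle with every other vertex
strictly `ε`-outside. -/
def EarE (V : ZMod n → Pt) (ε : ℝ) (i : ZMod n) : Prop :=
  ∃ t : ℝ, pw (V (i + 1)) (V (i - 1)) (V i) t = 0 ∧
    ∀ j, j ≠ i - 1 → j ≠ i → j ≠ i + 1 → 0 < ε * pw (V (i + 1)) (V (i - 1)) (V j) t

lemma step_min (hn : 4 ≤ n) (hconv : ConvexCCW V) (hgen : GenericPoly V) {ε : ℝ}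
    (hε : ε = 1 ∨ ε = -1) {a b : ZMod n} (hab2 : 2 ≤ (b - a).val) {t0 : ℝ}
    (hsep : SepC V ε a b t0) :
    ∃ k, BtwA a b k ∧ ∃ t1 : ℝ, pw (V b) (V a) (V k) t1 = 0 ∧
      ∀ j, j ≠ a → j ≠ b → j ≠ k → 0 < ε * pw (V b) (V a) (V j) t1 := by
  have hene : ε ≠ 0 := by rcases hε with rfl | rfl <;> norm_num
  have hab : a ≠ b := by
    intro h
    rw [h, sub_self, ZMod.val_zero] at hab2
    omega
  have hI : (Finset.univ.filter (fun j => BtwA a b j)).Nonempty := by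
    have hv1 : (1 : ZMod n).val = 1 := by
      rw [ZMod.val_one_eq_one_mod]
      exact Nat.mod_eq_of_lt (by omega)
    refine ⟨a + 1, Finset.mem_filter.2 ⟨Finset.mem_univ _, ?_, ?_⟩⟩
    · rw [show a + 1 - a = 1 by ring, hv1]
      omega
    · rw [show a + 1 - a = 1 by ring, hv1]
      omega
  obtain ⟨k, hkmem, hkmin⟩ := Finset.exists_min_image _
    (fun j => ε * (ipr (V b) (V a) (V j) / (2 * det2 (V b) (V a) (V j)))) hI
  have hk : BtwA a b k := (Finset.mem_filter.1 hkmem).2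
  have hDk : 0 < det2 (V b) (V a) (V k) := chord_btw hn hconv hk
  refine ⟨k, hk, ipr (V b) (V a) (V k) / (2 * det2 (V b) (V a) (V k)), ?_, ?_⟩
  · unfold pw
    field_simp
    ring
  · intro j hja hjb hjk
    have hpwk : pw (V b) (V a) (V k) (ipr (V b) (V a) (V k) / (2 * det2 (V b) (V a) (V k))) = 0 := by
      unfold pw
      field_simp
      ring
    by_cases hbtwj : BtwA a b j
    · have hDj : 0 < det2 (V b) (V a) (V j) := chord_btw hn hconv hbtwj
      have hmin := hkmin j (Finset.mem_filter.2 ⟨Finset.mem_univ _, hbtwj⟩)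
      beta_reduce at hmin
      have hid : ε * pw (V b) (V a) (V j) (ipr (V b) (V a) (V k) / (2 * det2 (V b) (V a) (V k)))
          = 2 * det2 (V b) (V a) (V j) *
            ((ε * (ipr (V b) (V a) (V j) / (2 * det2 (V b) (V a) (V j))))
              - (ε * (ipr (V b) (V a) (V k) / (2 * det2 (V b) (V a) (V k))))) := by
        unfold pw
        field_simp
      have hge : 0 ≤ ε * pw (V b) (V a) (V j)
          (ipr (V b) (V a) (V k) / (2 * det2 (V b) (V a) (V k))) := by
        rw [hid]
        have := hmin
        nlinarith
      rcases hge.lt_or_eq with h | h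
      · exact h
      · exfalso
        have hpwj : pw (V b) (V a) (V j) (ipr (V b) (V a) (V k) / (2 * det2 (V b) (V a) (V k))) = 0 := by
          rcases mul_eq_zero.1 h.symm with h' | h'
          · exact absurd h' hene
          · exact h'
        exact not_concyclic hconv hgen hab.symm hjb.symm (btw_ne_right hk).symm
          hja.symm (btw_ne_left hk).symm hjk hpwj hpwk
    · have hDj : det2 (V b) (V a) (V j) < 0 := chord_far hn hconv hab hja hjb hbtwj
      have h1 : 0 ≤ ε * pw (V b) (V a) (V j) t0 := hsep.2 j hja hjb hbtwj
      have h2 : 0 < ε * pw (V b) (V a) (V k) t0 :=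
        hsep.1 k hk
      have hid3 : ε * pw (V b) (V a) (V j) (ipr (V b) (V a) (V k) / (2 * det2 (V b) (V a) (V k)))
          = ε * pw (V b) (V a) (V j) t0 + 2 * det2 (V b) (V a) (V j) *
            (ε * t0 - ε * (ipr (V b) (V a) (V k) / (2 * det2 (V b) (V a) (V k)))) := by
        unfold pw
        field_simp
        ring
      have hkt : 0 < ε * (ipr (V b) (V a) (V k) / (2 * det2 (V b) (V a) (V k))) - ε * t0 := by
        have hid2 : ε * (ipr (V b) (V a) (V k) / (2 * det2 (V b) (V a) (V k))) - ε * t0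
            = (ε * pw (V b) (V a) (V k) t0) / (2 * det2 (V b) (V a) (V k)) := by
          unfold pw
          field_simp
        rw [hid2]
        exact div_pos h2 (by linarith)
      have hpos : 0 < 2 * det2 (V b) (V a) (V j) *
          (ε * t0 - ε * (ipr (V b) (V a) (V k) / (2 * det2 (V b) (V a) (V k)))) :=
        mul_pos_of_neg_of_neg (by linarith) (by linarith)
      linarith [hid3, h1, hpos]

lemma pw_rechord1 (A B C : Pt) (t1 : ℝ) (hC : pw A B C t1 = 0) (hCB : C ≠ B) :
    ∃ t' : ℝ, ∀ p : Pt, pw C B p t' = pw A B p t1 := by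
  obtain ⟨Z, hZ⟩ := exists_center A B t1
  have hCA : dist C Z = dist A Z := by
    have h1 := hZ C
    rw [hC] at h1
    exact dist_eq_of_sq_eq dist_nonneg dist_nonneg (by linarith)
  have hBA : dist B Z = dist A Z := by
    have h1 := hZ B
    rw [pw_right] at h1
    exact dist_eq_of_sq_eq dist_nonneg dist_nonneg (by linarith)
  obtain ⟨t', ht'⟩ := exists_param C B Z hCB (by rw [hCA, hBA])
  refine ⟨t', fun p => ?_⟩
  have h1 := ht' p
  have h2 := hZ p
  rw [hCA] at h1
  linarith

lemma pw_rechord2 (A B C : Pt) (t1 : ℝ) (hC : pw A B C t1 = 0) (hAC : A ≠ C) :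
    ∃ t' : ℝ, ∀ p : Pt, pw A C p t' = pw A B p t1 := by
  obtain ⟨Z, hZ⟩ := exists_center A B t1
  have hCA : dist C Z = dist A Z := by
    have h1 := hZ C
    rw [hC] at h1
    exact dist_eq_of_sq_eq dist_nonneg dist_nonneg (by linarith)
  obtain ⟨t', ht'⟩ := exists_param A C Z hAC hCA.symm
  refine ⟨t', fun p => ?_⟩
  have h1 := ht' p
  have h2 := hZ p
  linarith

lemma btwA_trans_left {a b k j : ZMod n} (hk : BtwA a b k) (hj : BtwA a k j) : BtwA a b j :=
  ⟨hj.1, lt_trans hj.2 hk.2⟩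

lemma val_sub_of_btw {a b k : ZMod n} (hk : BtwA a b k) :
    (b - k).val = (b - a).val - (k - a).val := by
  have h : b - k = (b - a) - (k - a) := by ring
  rw [h, ZMod.val_sub (le_of_lt hk.2)]

lemma btwA_trans_right {a b k j : ZMod n} (hk : BtwA a b k) (hj : BtwA k b j) : BtwA a b j := by
  have hsub := val_sub_of_btw hk
  have hja : j ≠ a := by
    intro hja
    rw [hja] at hj
    have h1 : a - k = -(k - a) := by ring
    haveI : NeZero (k - a) := ⟨fun h => by
      have h1 := hk.1
      rw [h, ZMod.val_zero] at h1
      exact lt_irrefl 0 h1⟩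
    have h2 : (a - k).val = n - (k - a).val := by
      rw [h1, ZMod.val_neg_of_ne_zero]
    have := hj.1
    have := hj.2
    have := ZMod.val_lt (b - a)
    omega
  constructor
  · have h0 : j - a ≠ 0 := sub_ne_zero.2 hja
    have := (ZMod.val_eq_zero (j - a)).not.2 h0
    omega
  · have hadd : j - a = (j - k) + (k - a) := by ring
    have hle : (j - a).val ≤ (j - k).val + (k - a).val := by
      rw [hadd]
      exact ZMod.val_add_le _ _
    have := hj.2
    omega

lemma earAux (hn : 4 ≤ n) (hconv : ConvexCCW V) (hgen : GenericPoly V) {ε : ℝ}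
    (hε : ε = 1 ∨ ε = -1) :
    ∀ m : ℕ, ∀ a b : ZMod n, (b - a).val = m + 2 →
      (∃ t0, SepC V ε a b t0) → ∃ i, BtwA a b i ∧ EarE V ε i := by
  intro m
  induction m using Nat.strong_induction_on with
  | _ m IH =>
    intro a b hval hex
    obtain ⟨t0, hsep⟩ := hex
    obtain ⟨k, hk, t1, hk0, hstrict⟩ := step_min hn hconv hgen hε (by omega) hsep
    have hinj := hconv.1
    have hka : k ≠ a := btw_ne_left hk
    have hkb : k ≠ b := btw_ne_right hk
    by_cases hsmall : (k - a).val = 1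
    · have hk1 : k = a + 1 := by
        have hd := decomp a k
        rw [hsmall] at hd
        rw [hd]
        push_cast
        ring
      by_cases hbase : m = 0
      · -- base : ear at k
        have hb2 : b = k + 1 := by
          have hd := decomp a b
          rw [hval, hbase] at hd
          rw [hd, hk1]
          push_cast
          ring
        have e1 : k - 1 = a := by rw [hk1]; ring
        have e2 : k + 1 = b := hb2.symm
        refine ⟨k, hk, t1, ?_, ?_⟩
        · rw [e1, e2, hk0]
        · intro j hj1 hj2 hj3
          rw [e1, e2]
          rw [e1] at hj1
          rw [e2] at hj3
          exact hstrict j hj1 hj3 hj2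
      · -- recurse into the right chord (k, b)
        have hVbk : V b ≠ V k := fun h => hkb (hinj h).symm
        obtain ⟨t', ht'⟩ := pw_rechord2 (V b) (V a) (V k) t1 hk0 hVbk
        have hsub := val_sub_of_btw hk
        have hsep' : SepC V ε k b t' := by
          constructor
          · intro j hj
            have hjab : BtwA a b j := btwA_trans_right hk hj
            rw [ht' (V j)]
            exact hstrict j (btw_ne_left hjab) (btw_ne_right hjab) (btw_ne_left hj)
          · intro j hjk hjb hnb
            rw [ht' (V j)]
            by_cases hja : j = a
            · rw [hja, pw_right]
              simp
            · exact le_of_lt (hstrict j hja hjb hjk)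
        have hval' : (b - k).val = (m - 1) + 2 := by omega
        obtain ⟨i, hi, hear⟩ := IH (m - 1) (by omega) k b hval' ⟨t', hsep'⟩
        exact ⟨i, btwA_trans_right hk hi, hear⟩
    · -- recurse into the left chord (a, k)
      have hVka : V k ≠ V a := fun h => hka (hinj h)
      obtain ⟨t', ht'⟩ := pw_rechord1 (V b) (V a) (V k) t1 hk0 hVka
      have hsep' : SepC V ε a k t' := by
        constructor
        · intro j hj
          have hjab : BtwA a b j := btwA_trans_left hk hj
          rw [ht' (V j)]
          exact hstrict j (btw_ne_left hj) (btw_ne_right hjab) (btw_ne_right hj)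
        · intro j hja hjk hnb
          rw [ht' (V j)]
          by_cases hjb : j = b
          · rw [hjb, pw_left]
            simp
          · exact le_of_lt (hstrict j hja hjb hjk)
      have hval' : (k - a).val = ((k - a).val - 2) + 2 := by
        have := hk.1
        omega
      obtain ⟨i, hi, hear⟩ := IH ((k - a).val - 2) (by
        have := hk.2
        omega) a k hval' ⟨t', hsep'⟩
      exact ⟨i, btwA_trans_left hk hi, hear⟩

lemma neg_one_val (hn : 4 ≤ n) : (-1 : ZMod n).val = n - 1 := by
  have h : ((n - 1 : ℕ) : ZMod n) = -1 := by
    have h2 : ((n - 1 : ℕ) : ZMod n) = (n : ℕ) - 1 := by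
      push_cast [Nat.cast_sub (by omega : 1 ≤ n)]
      ring
    rw [h2, ZMod.natCast_self]
    ring
  rw [← h, ZMod.val_cast_of_lt (by omega)]

lemma edge_gap_val (hn : 4 ≤ n) (e : ZMod n) : (e - (e + 1)).val = n - 1 := by
  rw [show e - (e + 1) = -1 by ring, neg_one_val hn]

lemma sep_edge (hn : 4 ≤ n) (hconv : ConvexCCW V) {ε : ℝ} (hε : ε = 1 ∨ ε = -1) (e : ZMod n) :
    ∃ t0, SepC V ε (e + 1) e t0 := by
  have hv1 : (1 : ZMod n).val = 1 := by
    rw [ZMod.val_one_eq_one_mod]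
    exact Nat.mod_eq_of_lt (by omega)
  have hgap := edge_gap_val hn e
  have heps : ε * ε = 1 := by rcases hε with rfl | rfl <;> norm_num
  have hI : (Finset.univ.filter (fun j => BtwA (e + 1) e j)).Nonempty := by
    refine ⟨e + 1 + 1, Finset.mem_filter.2 ⟨Finset.mem_univ _, ?_, ?_⟩⟩
    · rw [show e + 1 + 1 - (e + 1) = 1 by ring, hv1]
      omega
    · rw [show e + 1 + 1 - (e + 1) = 1 by ring, hv1, hgap]
      omega
  obtain ⟨k0, hk0mem, hk0min⟩ := Finset.exists_min_image _
    (fun j => ε * (ipr (V e) (V (e + 1)) (V j) / (2 * det2 (V e) (V (e + 1)) (V j)))) hI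
  have hk0 : BtwA (e + 1) e k0 := (Finset.mem_filter.1 hk0mem).2
  refine ⟨ε * (ε * (ipr (V e) (V (e + 1)) (V k0) / (2 * det2 (V e) (V (e + 1)) (V k0))) - 1),
    ?_, ?_⟩
  · intro j hj
    have hDj : 0 < det2 (V e) (V (e + 1)) (V j) := chord_btw hn hconv hj
    have hmin := hk0min j (Finset.mem_filter.2 ⟨Finset.mem_univ _, hj⟩)
    beta_reduce at hmin
    have hid : ε * pw (V e) (V (e + 1)) (V j)
        (ε * (ε * (ipr (V e) (V (e + 1)) (V k0) / (2 * det2 (V e) (V (e + 1)) (V k0))) - 1))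
        = 2 * det2 (V e) (V (e + 1)) (V j) *
          ((ε * (ipr (V e) (V (e + 1)) (V j) / (2 * det2 (V e) (V (e + 1)) (V j))))
            - (ε * ε) * (ε * (ipr (V e) (V (e + 1)) (V k0) /
              (2 * det2 (V e) (V (e + 1)) (V k0))) - 1)) := by
      unfold pw
      field_simp
    rw [hid, heps]
    have : (1 : ℝ) ≤ (ε * (ipr (V e) (V (e + 1)) (V j) / (2 * det2 (V e) (V (e + 1)) (V j))))
        - (ε * (ipr (V e) (V (e + 1)) (V k0) / (2 * det2 (V e) (V (e + 1)) (V k0))) - 1) := by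
      linarith
    nlinarith
  · intro j hja hjb hnb
    exfalso
    have hab : e + 1 ≠ e := by
      intro h
      have h1 : (1 : ZMod n) = 0 := by linear_combination h
      rw [h1, ZMod.val_zero] at hv1
      omega
    rcases btw_or hab hja hjb with h | h
    · exact hnb h
    · have h2 := h.2
      have h1 := h.1
      rw [show e + 1 - e = 1 by ring, hv1] at h2
      omega

lemma shift_ne (hn : 4 ≤ n) {x y : ZMod n} {c : ℕ} (h1 : 0 < c) (h2 : c < n)
    (hxy : x - y = ((c : ℕ) : ZMod n)) : x ≠ y := by
  intro h
  rw [h, sub_self] at hxy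
  exact natCast_zmod_ne_zero h1 h2 hxy.symm

lemma ear_loc {On : ZMod n → Pt} {Rr : ZMod n → ℝ} (hn : 4 ≤ n) (hconv : ConvexCCW V)
    (hgen : GenericPoly V) (hcirc : IsCircumData V On Rr) {ε : ℝ} {i : ZMod n}
    (h : EarE V ε i) :
    ∀ j, j ≠ i - 1 → j ≠ i → j ≠ i + 1 → 0 < ε * (dist (V j) (On i) ^ 2 - Rr i ^ 2) := by
  obtain ⟨t, h0, hstr⟩ := h
  obtain ⟨Z, hZ⟩ := exists_center (V (i + 1)) (V (i - 1)) t
  have hd1 : dist (V (i - 1)) Z = dist (V (i + 1)) Z := by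
    have h1 := hZ (V (i - 1))
    rw [pw_right] at h1
    exact dist_eq_of_sq_eq dist_nonneg dist_nonneg (by linarith)
  have hd2 : dist (V i) Z = dist (V (i + 1)) Z := by
    have h1 := hZ (V i)
    rw [h0] at h1
    exact dist_eq_of_sq_eq dist_nonneg dist_nonneg (by linarith)
  have hne1 : i + 1 ≠ i - 1 := shift_ne hn (c := 2) (by omega) (by omega) (by push_cast; ring)
  have hne2 : i - 1 ≠ i := by
    intro h'
    exact (shift_ne hn (c := 1) (by omega) (by omega)
      (by push_cast [show i - (i - 1) = 1 from by ring]; simp) : i ≠ i - 1) h'.symm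
  have hne3 : i + 1 ≠ i := shift_ne hn (c := 1) (by omega) (by omega) (by push_cast; ring)
  have hdet : det2 (V (i + 1)) (V (i - 1)) (V i) ≠ 0 :=
    det2_ne_zero_of_not_collinear (hgen.1 (i + 1) (i - 1) i hne1 hne2 hne3)
  obtain ⟨hA, hB, hC⟩ := hcirc i
  have hZO : Z = On i := center_unique hdet hd1.symm (hd1.trans hd2.symm)
    (hC.trans hA.symm) (hA.trans hB.symm)
  intro j hj1 hj2 hj3
  have hs := hstr j hj1 hj2 hj3
  have hv := hZ (V j)
  rw [hZO, hC] at hv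
  rw [hv]
  exact hs

lemma two_ears (hn : 4 ≤ n) (hconv : ConvexCCW V) (hgen : GenericPoly V) {ε : ℝ}
    (hε : ε = 1 ∨ ε = -1) : ∃ i1 i2 : ZMod n, i1 ≠ i2 ∧ EarE V ε i1 ∧ EarE V ε i2 := by
  obtain ⟨t0, hs⟩ := sep_edge hn hconv hε (0 : ZMod n)
  obtain ⟨i1, hb1, he1⟩ := earAux hn hconv hgen hε (n - 3) ((0 : ZMod n) + 1) 0
    (by rw [edge_gap_val hn]; omega) ⟨t0, hs⟩
  obtain ⟨t0', hs'⟩ := sep_edge hn hconv hε i1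
  obtain ⟨i2, hb2, he2⟩ := earAux hn hconv hgen hε (n - 3) (i1 + 1) i1
    (by rw [edge_gap_val hn]; omega) ⟨t0', hs'⟩
  exact ⟨i1, i2, (btw_ne_right hb2).symm, he1, he2⟩

lemma canon (hn : 4 ≤ n) (i : ZMod n) :
    i - 1 = i + ((n - 1 : ℕ) : ZMod n) ∧ i - 2 = i + ((n - 2 : ℕ) : ZMod n) ∧
    i + 1 = i + ((1 : ℕ) : ZMod n) ∧ i + 2 = i + ((2 : ℕ) : ZMod n) := by
  have hc1 : ((n - 1 : ℕ) : ZMod n) = -1 := by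
    push_cast [Nat.cast_sub (by omega : 1 ≤ n)]
    simp [ZMod.natCast_self]
  have hc2 : ((n - 2 : ℕ) : ZMod n) = -2 := by
    push_cast [Nat.cast_sub (by omega : 2 ≤ n)]
    simp [ZMod.natCast_self]
  refine ⟨by rw [hc1]; ring, by rw [hc2]; ring, by push_cast; ring, by push_cast; ring⟩

lemma ear_locmax {On : ZMod n → Pt} {Rr : ZMod n → ℝ} (hn : 4 ≤ n) (hconv : ConvexCCW V)
    (hgen : GenericPoly V) (hcirc : IsCircumData V On Rr) {i : ZMod n}
    (h : EarE V 1 i) : LocMax V On Rr i := by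
  have hR0 : 0 ≤ Rr i := (hcirc i).2.1 ▸ dist_nonneg
  have key := ear_loc hn hconv hgen hcirc h
  obtain ⟨c1, c2, c3, c4⟩ := canon hn i
  constructor
  · have k1 := key (i - 2) (by rw [c2, c1]; exact idx_ne i (by omega) (by omega) (by omega))
      (by rw [c2]; exact (idx_ne_self i (by omega) (by omega)).symm)
      (by rw [c2, c3]; exact idx_ne i (by omega) (by omega) (by omega))
    nlinarith [dist_nonneg (x := V (i - 2)) (y := On i), hR0, k1]
  · have k2 := key (i + 2) (by rw [c4, c1]; exact idx_ne i (by omega) (by omega) (by omega))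
      (by rw [c4]; exact (idx_ne_self i (by omega) (by omega)).symm)
      (by rw [c4, c3]; exact idx_ne i (by omega) (by omega) (by omega))
    nlinarith [dist_nonneg (x := V (i + 2)) (y := On i), hR0, k2]

lemma ear_locmin {On : ZMod n → Pt} {Rr : ZMod n → ℝ} (hn : 4 ≤ n) (hconv : ConvexCCW V)
    (hgen : GenericPoly V) (hcirc : IsCircumData V On Rr) {i : ZMod n}
    (h : EarE V (-1) i) : LocMin V On Rr i := by
  have hR0 : 0 ≤ Rr i := (hcirc i).2.1 ▸ dist_nonneg
  have key := ear_loc hn hconv hgen hcirc h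
  obtain ⟨c1, c2, c3, c4⟩ := canon hn i
  constructor
  · have k1 := key (i - 2) (by rw [c2, c1]; exact idx_ne i (by omega) (by omega) (by omega))
      (by rw [c2]; exact (idx_ne_self i (by omega) (by omega)).symm)
      (by rw [c2, c3]; exact idx_ne i (by omega) (by omega) (by omega))
    nlinarith [dist_nonneg (x := V (i - 2)) (y := On i), hR0, k1]
  · have k2 := key (i + 2) (by rw [c4, c1]; exact idx_ne i (by omega) (by omega) (by omega))
      (by rw [c4]; exact (idx_ne_self i (by omega) (by omega)).symm)
      (by rw [c4, c3]; exact idx_ne i (by omega) (by omega) (by omega))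
    nlinarith [dist_nonneg (x := V (i + 2)) (y := On i), hR0, k2]

end Poly

end FourVertexAux

/-- Local Four-Vertex Theorem: every generic convex polygon with at least four vertices
has at least two locally maximal-extremal and two locally minimal-extremal vertices,
hence at least four locally extremal vertices. -/
theorem local_four_vertex
    (n : ℕ) [NeZero n] (hn : 4 ≤ n)
    (V O : ZMod n → Pt) (R : ZMod n → ℝ)
    (hconv : ConvexCCW V) (hgen : GenericPoly V) (hcirc : IsCircumData V O R) :
    2 ≤ {i : ZMod n | LocMax V O R i}.ncard ∧
    2 ≤ {i : ZMod n | LocMin V O R i}.ncard ∧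
    4 ≤ {i : ZMod n | LocMax V O R i ∨ LocMin V O R i}.ncard := by
  obtain ⟨a1, a2, ha12, hea1, hea2⟩ := two_ears hn hconv hgen (Or.inl rfl)
  obtain ⟨b1, b2, hb12, heb1, heb2⟩ := two_ears hn hconv hgen (Or.inr rfl)
  have hm1 : LocMax V O R a1 := ear_locmax hn hconv hgen hcirc hea1
  have hm2 : LocMax V O R a2 := ear_locmax hn hconv hgen hcirc hea2
  have hn1 : LocMin V O R b1 := ear_locmin hn hconv hgen hcirc heb1
  have hn2 : LocMin V O R b2 := ear_locmin hn hconv hgen hcirc heb2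
  have hdisj : ∀ i : ZMod n, LocMax V O R i → LocMin V O R i → False := by
    intro i h1 h2
    exact absurd (lt_trans h1.1 h2.1) (lt_irrefl _)
  have hab11 : a1 ≠ b1 := fun h => hdisj a1 hm1 (h ▸ hn1)
  have hab12 : a1 ≠ b2 := fun h => hdisj a1 hm1 (h ▸ hn2)
  have hab21 : a2 ≠ b1 := fun h => hdisj a2 hm2 (h ▸ hn1)
  have hab22 : a2 ≠ b2 := fun h => hdisj a2 hm2 (h ▸ hn2)
  refine ⟨?_, ?_, ?_⟩
  · calc (2 : ℕ) = ({a1, a2} : Set (ZMod n)).ncard := (Set.ncard_pair ha12).symm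
    _ ≤ _ := Set.ncard_le_ncard (by
        intro x hx
        rcases hx with rfl | rfl
        · exact hm1
        · exact hm2) (Set.toFinite _)
  · calc (2 : ℕ) = ({b1, b2} : Set (ZMod n)).ncard := (Set.ncard_pair hb12).symm
    _ ≤ _ := Set.ncard_le_ncard (by
        intro x hx
        rcases hx with rfl | rfl
        · exact hn1
        · exact hn2) (Set.toFinite _)
  · have hc4 : ({a1, a2, b1, b2} : Set (ZMod n)).ncard = 4 := by
      rw [Set.ncard_insert_of_notMem (by simp [ha12, hab11, hab12]),
        Set.ncard_insert_of_notMem (by simp [hab21, hab22]),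
        Set.ncard_pair hb12]
    calc (4 : ℕ) = ({a1, a2, b1, b2} : Set (ZMod n)).ncard := hc4.symm
    _ ≤ _ := Set.ncard_le_ncard (by
        intro x hx
        rcases hx with rfl | rfl | rfl | rfl
        · exact Or.inl hm1
        · exact Or.inl hm2
        · exact Or.inr hn1
        · exact Or.inr hn2) (Set.toFinite _)
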